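/- Let R and S be commutative rings with unity, f : R → S a ring homomorphism, and J a proper ideal of S. Assume f maps every regular element of R to a regular element of S. If the amalgamation R ⋈^f J is a Prüfer ring, then R is a Prüfer ring and J_{T_m} = f(r)·J_{T_m} for every maximal ideal m of R and every regular element r of R. -/

import Mathlib

open Pointwise

/-- The amalgamation `R ⋈^f J` of `R` with `S` along the ideal `J` with respect to
`f : R →+* S`, as a subring of `R × S`. -/
def amalgamation {R S : Type*} [CommRing R] [CommRing S] (f : R →+* S) (J : Ideal S) :
    Subring (R × S) where
  carrier := {p | ∃ j ∈ J, p.2 = f p.1 + j}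
  zero_mem' := ⟨0, J.zero_mem, by simp⟩
  one_mem' := ⟨0, J.zero_mem, by simp⟩
  add_mem' := by
    rintro ⟨a, a'⟩ ⟨b, b'⟩ ⟨j, hj, h1⟩ ⟨k, hk, h2⟩
    exact ⟨j + k, J.add_mem hj hk, by simp_all; ring⟩
  neg_mem' := by
    rintro ⟨a, a'⟩ ⟨j, hj, h1⟩
    exact ⟨-j, J.neg_mem hj, by simp_all; ring⟩
  mul_mem' := by
    rintro ⟨a, a'⟩ ⟨b, b'⟩ ⟨j, hj, h1⟩ ⟨k, hk, h2⟩
    refine ⟨f a * k + j * f b + j * k, ?_, by simp_all; ring⟩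
    exact J.add_mem (J.add_mem (J.mul_mem_left _ hk) (J.mul_mem_right _ hj))
      (J.mul_mem_right _ hj)

/-- The set of zero-divisors of a commutative ring `A`. -/
def zdivSet (A : Type*) [CommRing A] : Set A := {a | ∃ b, b ≠ 0 ∧ a * b = 0}

/-- A commutative ring is a Prüfer ring if every nonzero finitely generated regular ideal
is projective (equivalently, invertible). -/
def IsPruferRing (A : Type*) [CommRing A] : Prop :=
  ∀ I : Ideal A, I ≠ ⊥ → I.FG → (∃ r ∈ I, r ∈ nonZeroDivisors A) → Module.Projective A I

/-- The multiplicatively closed subset `T_m = f(R \\ m) + J` of `S`. -/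
def amalgT {R S : Type*} [CommRing R] [CommRing S] (f : R →+* S) (J : Ideal S)
    (m : Ideal R) (hm : m.IsPrime) : Submonoid S where
  carrier := {s | ∃ a ∉ m, ∃ j ∈ J, s = f a + j}
  one_mem' := ⟨1, fun h => hm.ne_top ((Ideal.eq_top_iff_one m).mpr h), 0, J.zero_mem, by simp⟩
  mul_mem' := by
    rintro s t ⟨a, ha, j, hj, rfl⟩ ⟨b, hb, k, hk, rfl⟩
    refine ⟨a * b, fun h => ?_, f a * k + j * f b + j * k, ?_, by simp [map_mul]; ring⟩
    · rcases hm.mem_or_mem h with h | h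
      exacts [ha h, hb h]
    · exact J.add_mem (J.add_mem (J.mul_mem_left _ hk) (J.mul_mem_right _ hj))
        (J.mul_mem_right _ hj)

lemma exists_dual_basis {A : Type*} [CommRing A] {ι : Type*} [Fintype ι] (g : ι → A)
    (hproj : Module.Projective A (Ideal.span (Set.range g))) :
    ∃ φ : ι → (Ideal.span (Set.range g) →ₗ[A] A),
      ∀ x : Ideal.span (Set.range g), (x : A) = ∑ i, φ i x * g i := by
  haveI := hproj
  set I := Ideal.span (Set.range g) with hI
  have hmem : ∀ c : ι → A, ∑ i, c i * g i ∈ I := fun c =>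
    Ideal.sum_mem _ fun i _ => Ideal.mul_mem_left _ _ (Ideal.subset_span (Set.mem_range_self i))
  let π : (ι → A) →ₗ[A] I :=
    { toFun := fun c => ⟨∑ i, c i * g i, hmem c⟩
      map_add' := by
        intro c d
        apply Subtype.ext
        simp [add_mul, Finset.sum_add_distrib]
      map_smul' := by
        intro a c
        apply Subtype.ext
        simp [Finset.mul_sum, mul_assoc] }
  have hsurj : Function.Surjective π := by
    rintro ⟨x, hx⟩
    rw [hI] at hx
    obtain ⟨c, hc⟩ := (Submodule.mem_span_range_iff_exists_fun A).mp hx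
    exact ⟨c, Subtype.ext (by simpa [π, smul_eq_mul] using hc)⟩
  obtain ⟨h, hh⟩ := Module.projective_lifting_property π LinearMap.id hsurj
  refine ⟨fun i => (LinearMap.proj i).comp h, fun x => ?_⟩
  have := congrArg Subtype.val (congrArg (fun F => F x) hh)
  simpa [π] using this.symm


section AuxAmalg

variable {R S : Type*} [CommRing R] [CommRing S] (f : R →+* S) (J : Ideal S)

def amalgE (a : R) : amalgamation f J :=
  ⟨(a, f a), ⟨0, J.zero_mem, (add_zero _).symm⟩⟩

lemma amalgE_reg (hreg : ∀ r ∈ nonZeroDivisors R, f r ∈ nonZeroDivisors S)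
    {r : R} (hr : r ∈ nonZeroDivisors R) :
    amalgE f J r ∈ nonZeroDivisors (amalgamation f J) := by
  rw [mem_nonZeroDivisors_iff_right]
  intro x hx
  have hval : (x : R × S) * ((r, f r) : R × S) = 0 := by
    have := congrArg Subtype.val hx
    simpa [amalgE] using this
  have h1 : (x : R × S).1 * r = 0 := congrArg Prod.fst hval
  have h2 : (x : R × S).2 * f r = 0 := congrArg Prod.snd hval
  exact Subtype.ext (Prod.ext (hr.2 _ h1) ((hreg r hr).2 _ h2))


lemma amalgE_mul (a b : R) : amalgE f J (a * b) = amalgE f J a * amalgE f J b := by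
  apply Subtype.ext
  simp [amalgE, Prod.ext_iff]


set_option synthInstance.maxHeartbeats 400000 in
set_option maxHeartbeats 1600000 in
lemma part1 (hreg : ∀ r ∈ nonZeroDivisors R, f r ∈ nonZeroDivisors S)
    (hP : IsPruferRing (amalgamation f J)) : IsPruferRing R := by
  intro I₀ hbot hfg hregI
  obtain ⟨r, hrI, hr⟩ := hregI
  obtain ⟨T, hT⟩ := hfg
  let ι := {x // x ∈ T}
  let v : ι → R := fun i => i.val
  have hv : Submodule.span R (Set.range v) = I₀ := by
    rw [← hT]
    congr 1
    rw [show Set.range v = {x | x ∈ T} from Subtype.range_coe_subtype, Finset.setOf_mem]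
  let e : R → (amalgamation f J) := amalgE f J
  let G : ι → (amalgamation f J) := fun i => e (v i)
  set I : Ideal (amalgamation f J) := Ideal.span (Set.range G) with hIdef
  have hmemI : ∀ a ∈ I₀, e a ∈ I := by
    intro a ha
    rw [← hv] at ha
    refine Submodule.span_induction (fun x hx => ?_) ?_ (fun x y _ _ hx hy => ?_)
      (fun c x _ hx => ?_) ha
    · obtain ⟨i, rfl⟩ := hx
      exact Ideal.subset_span ⟨i, rfl⟩
    · have : e 0 = 0 := Subtype.ext (by simp [e, amalgE])
      rw [this]; exact I.zero_mem
    · have : e (x + y) = e x + e y := Subtype.ext (by simp [e, amalgE, Prod.ext_iff])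
      rw [this]; exact I.add_mem hx hy
    · have : e (c • x) = e c * e x := by
        simpa [smul_eq_mul] using amalgE_mul f J c x
      rw [this]; exact I.mul_mem_left _ hx
  have hr0 : r ≠ 0 := by
    intro h
    obtain ⟨a, haI, ha⟩ := (Submodule.ne_bot_iff I₀).mp hbot
    exact ha (hr.2 a (by rw [h, mul_zero]))
  have hτreg := amalgE_reg f J hreg hr
  have hτne : e r ≠ 0 := by
    intro h
    exact hr0 (congrArg (fun x => (Subtype.val x).1) h)
  have hIbot : I ≠ ⊥ := (Submodule.ne_bot_iff I).mpr ⟨e r, hmemI r hrI, hτne⟩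
  have hIfg : I.FG := Submodule.fg_span (Set.finite_range G)
  have hproj : Module.Projective (amalgamation f J) I := hP I hIbot hIfg ⟨e r, hmemI r hrI, hτreg⟩
  obtain ⟨φ, hφ⟩ := exists_dual_basis G hproj
  let x_ : I₀ → I := fun a => ⟨e a.1, hmemI _ a.2⟩
  let iMap : I₀ →ₗ[R] (ι → R) :=
    { toFun := fun a => fun i => ((φ i (x_ a) : amalgamation f J) : R × S).1
      map_add' := by
        intro a b
        funext i
        have hx : x_ (a + b) = x_ a + x_ b :=
          Subtype.ext (Subtype.ext (by simp [x_, e, amalgE, Prod.ext_iff]))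
        simp [hx, map_add]
      map_smul' := by
        intro c a
        funext i
        show ((φ i (x_ (c • a)) : amalgamation f J) : R × S).1 =
          c * ((φ i (x_ a) : amalgamation f J) : R × S).1
        have hx : x_ (c • a) = e c • x_ a := by
          apply Subtype.ext
          apply Subtype.ext
          have : e (c * a.1) = e c * e a.1 := amalgE_mul f J c a.1
          simpa [x_, smul_eq_mul] using congrArg Subtype.val this
        rw [hx, map_smul]
        simp [e, amalgE, smul_eq_mul] }
  let sMap : (ι → R) →ₗ[R] I₀ :=
    { toFun := fun c => ⟨∑ i, c i * v i, by
        rw [← hv]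
        exact Ideal.sum_mem _ fun i _ =>
          Ideal.mul_mem_left _ _ (Submodule.subset_span (Set.mem_range_self i))⟩
      map_add' := by
        intro c d
        apply Subtype.ext
        simp [add_mul, Finset.sum_add_distrib]
      map_smul' := by
        intro a c
        apply Subtype.ext
        simp [Finset.mul_sum, mul_assoc] }
  refine Module.Projective.of_split iMap sMap ?_
  apply LinearMap.ext
  intro a
  apply Subtype.ext
  have hdb := hφ (x_ a)
  have hval : ((x_ a : amalgamation f J) : R × S).1 = ∑ i, (((φ i (x_ a) : amalgamation f J) : R × S)).1 * v i := by
    have := congrArg (fun z => (Subtype.val z).1) hdb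
    simpa [Prod.fst_sum, G, e, amalgE] using this
  have : (a : R) = ∑ i, (((φ i (x_ a) : amalgamation f J) : R × S)).1 * v i := hval
  simpa [sMap, iMap] using this.symm


set_option synthInstance.maxHeartbeats 400000 in
set_option maxHeartbeats 1600000 in
lemma part2 (hJ : J ≠ ⊤) (hreg : ∀ r ∈ nonZeroDivisors R, f r ∈ nonZeroDivisors S)
    (hP : IsPruferRing (amalgamation f J)) :
    ∀ (m : Ideal R) (hm : m.IsMaximal), ∀ r ∈ nonZeroDivisors R,
      algebraMap S (Localization (amalgT f J m hm.isPrime)) (f r) •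
          J.map (algebraMap S (Localization (amalgT f J m hm.isPrime))) =
        J.map (algebraMap S (Localization (amalgT f J m hm.isPrime))) := by
  intro m hm r hr
  set L := Localization (amalgT f J m hm.isPrime) with hL
  set alg := algebraMap S L with halg
  have hr0 : r ≠ 0 := by
    intro h
    apply hJ
    have h1 : (1 : R) = 0 := hr.2 1 (by rw [h, mul_zero])
    have h2 : (1 : S) = 0 := by
      calc (1 : S) = f 1 := (map_one f).symm
        _ = f 0 := by rw [h1]
        _ = 0 := map_zero f
    rw [Ideal.eq_top_iff_one, h2]
    exact J.zero_mem
  apply le_antisymm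
  · exact Submodule.smul_le_self_of_tower _ _
  · rw [Ideal.map]
    refine Ideal.span_le.mpr ?_
    rintro _ ⟨j, hj, rfl⟩
    -- set up the two-generator ideal
    let G : Fin 2 → (amalgamation f J) := ![amalgE f J r, ⟨(0, j), ⟨j, hj, by simp⟩⟩]
    set I : Ideal (amalgamation f J) := Ideal.span (Set.range G) with hIdef
    have hτmem : amalgE f J r ∈ I := Ideal.subset_span ⟨0, rfl⟩
    have hτreg := amalgE_reg f J hreg hr
    have hτne : amalgE f J r ≠ 0 := fun h => hr0 (congrArg (fun x => (Subtype.val x).1) h)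
    have hIbot : I ≠ ⊥ := (Submodule.ne_bot_iff I).mpr ⟨_, hτmem, hτne⟩
    have hproj : Module.Projective (amalgamation f J) I :=
      hP I hIbot (Submodule.fg_span (Set.finite_range G)) ⟨_, hτmem, hτreg⟩
    obtain ⟨φ, hφ⟩ := exists_dual_basis G hproj
    let x0 : I := ⟨G 0, Ideal.subset_span ⟨0, rfl⟩⟩
    let x1 : I := ⟨G 1, Ideal.subset_span ⟨1, rfl⟩⟩
    have hexch : ∀ (i : Fin 2) (x y : I), (x : amalgamation f J) * φ i y
        = (y : amalgamation f J) * φ i x := by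
      intro i x y
      have h1 : (x : amalgamation f J) • y = (y : amalgamation f J) • x :=
        Subtype.ext (mul_comm _ _)
      have := congrArg (φ i) h1
      simpa [map_smul, smul_eq_mul] using this
    -- exchange identity for i = 1 : (r, f r) * φ 1 x1 = (0, j) * φ 1 x0
    have hex1 := hexch 1 x0 x1
    have he2fst : ((φ 1 x1 : amalgamation f J) : R × S).1 = 0 := by
      have := congrArg (fun z : (amalgamation f J) => ((z : R × S)).1) hex1
      simp only [MulMemClass.coe_mul, Prod.fst_mul] at this
      have h0 : ((x1 : amalgamation f J) : R × S).1 = 0 := rfl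
      have hrr : ((x0 : amalgamation f J) : R × S).1 = r := rfl
      rw [h0, hrr, zero_mul] at this
      exact hr.2 _ (by rw [mul_comm]; exact this)
    -- the second component of φ 1 x1 lies in J
    have he2J : ((φ 1 x1 : amalgamation f J) : R × S).2 ∈ J := by
      obtain ⟨k, hk, hk2⟩ := (φ 1 x1).2
      rw [hk2, he2fst, map_zero, zero_add]
      exact hk
    -- dual basis identity at x1
    have hdb := hφ x1
    have hdb1 : ((x1 : amalgamation f J) : R × S)
        = ((φ 0 x1 : amalgamation f J) : R × S) * ((G 0 : amalgamation f J) : R × S)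
          + ((φ 1 x1 : amalgamation f J) : R × S) * ((G 1 : amalgamation f J) : R × S) := by
      have := congrArg (fun z : (amalgamation f J) => (z : R × S)) hdb
      simpa [Fin.sum_univ_two] using this
    have hdfst : ((φ 0 x1 : amalgamation f J) : R × S).1 = 0 := by
      have := congrArg Prod.fst hdb1
      simp only [Prod.fst_mul, Prod.fst_add] at this
      have hg0 : ((G 0 : amalgamation f J) : R × S).1 = r := rfl
      have hg1 : ((G 1 : amalgamation f J) : R × S).1 = 0 := rfl
      rw [hg0, hg1, mul_zero, add_zero] at this
      exact hr.2 _ this.symm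
    have hdJ : ((φ 0 x1 : amalgamation f J) : R × S).2 ∈ J := by
      obtain ⟨l, hl, hl2⟩ := (φ 0 x1).2
      rw [hl2, hdfst, map_zero, zero_add]
      exact hl
    -- second components
    have hsnd : j = ((φ 0 x1 : amalgamation f J) : R × S).2 * f r
        + ((φ 1 x1 : amalgamation f J) : R × S).2 * j := by
      have := congrArg Prod.snd hdb1
      simp only [Prod.snd_mul, Prod.snd_add] at this
      have hg0 : ((G 0 : amalgamation f J) : R × S).2 = f r := rfl
      have hg1 : ((G 1 : amalgamation f J) : R × S).2 = j := rfl
      rw [hg0, hg1] at this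
      exact this
    set dS := ((φ 0 x1 : amalgamation f J) : R × S).2 with hdS
    set kS := ((φ 1 x1 : amalgamation f J) : R × S).2 with hkS
    have htT : (1 : S) - kS ∈ amalgT f J m hm.isPrime := by
      refine ⟨1, fun h => hm.ne_top ((Ideal.eq_top_iff_one m).mpr h), -kS, J.neg_mem he2J, ?_⟩
      rw [map_one]
      ring
    have hident : ((1 : S) - kS) * j = dS * f r := by
      linear_combination hsnd
    obtain ⟨u, hu⟩ := IsLocalization.map_units L ⟨(1 : S) - kS, htT⟩
    have key : alg (f r) • ((u⁻¹ : Lˣ) * alg dS) = alg j := by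
      rw [smul_eq_mul]
      have h2 : alg ((1 - kS) * j) = alg (dS * f r) := congrArg alg hident
      rw [map_mul, map_mul] at h2
      calc alg (f r) * ((u⁻¹ : Lˣ) * alg dS)
          = (u⁻¹ : Lˣ) * (alg dS * alg (f r)) := by ring
        _ = (u⁻¹ : Lˣ) * (alg (1 - kS) * alg j) := by rw [← h2]
        _ = (u⁻¹ : Lˣ) * ((u : Lˣ) * alg j) := by rw [hu]
        _ = alg j := by rw [Units.inv_mul_cancel_left]
    have hymem : ((u⁻¹ : Lˣ) : L) * alg dS ∈ J.map alg :=
      Ideal.mul_mem_left _ _ (Ideal.mem_map_of_mem alg hdJ)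
    exact key ▸ Submodule.smul_mem_pointwise_smul _ _ _ hymem

end AuxAmalg

theorem stmt5 {R S : Type*} [CommRing R] [CommRing S] (f : R →+* S) (J : Ideal S)
    (hJ : J ≠ ⊤) (hreg : ∀ r ∈ nonZeroDivisors R, f r ∈ nonZeroDivisors S)
    (hP : IsPruferRing (amalgamation f J)) :
    IsPruferRing R ∧
      ∀ (m : Ideal R) (hm : m.IsMaximal), ∀ r ∈ nonZeroDivisors R,
        algebraMap S (Localization (amalgT f J m hm.isPrime)) (f r) •
            J.map (algebraMap S (Localization (amalgT f J m hm.isPrime))) =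
          J.map (algebraMap S (Localization (amalgT f J m hm.isPrime))) := by
  exact ⟨part1 f J hreg hP, part2 f J hJ hreg hP⟩
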